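/- Let B be a nondegenerate alternating bilinear form on a finite-dimensional complex vector space V and let P be nilpotent and self-adjoint with respect to B. For a subspace U ⊆ V the following are equivalent: (1) g(U) = U for every automorphism g of (V, B, P); (2) U is a finite sum of subspaces of the form ker P^k ∩ im P^l with k, l ≥ 0. -/
import Mathlib


open Module

/-- An automorphism of `(V, B, P)`: a linear automorphism preserving `B` and
commuting with `P`. -/
def IsAut {V : Type*} [AddCommGroup V] [Module ℂ V]
    (B : V →ₗ[ℂ] V →ₗ[ℂ] ℂ) (P : V →ₗ[ℂ] V) (g : V ≃ₗ[ℂ] V) : Prop :=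
  (∀ u v, B (g u) (g v) = B u v) ∧ ∀ v, g (P v) = P (g v)

section InvariantAux

variable {V : Type*} [AddCommGroup V] [Module ℂ V]
variable (B : V →ₗ[ℂ] V →ₗ[ℂ] ℂ) (P : V →ₗ[ℂ] V)

lemma aux_bskew (hBalt : ∀ v, B v v = 0) (x y : V) : B x y = - B y x := by
  have h := hBalt (x + y)
  simp only [map_add, LinearMap.add_apply, hBalt] at h
  linear_combination h

lemma aux_bpow (hPsa : ∀ u v, B (P u) v = B u (P v)) (r : ℕ) (x y : V) :
    B ((P ^ r) x) y = B x ((P ^ r) y) := by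
  induction r generalizing x y with
  | zero => simp
  | succ r ih =>
      have h1 : (P ^ (r+1)) x = (P ^ r) (P x) := by
        rw [pow_succ, Module.End.mul_apply]
      have h2 : (P ^ (r+1)) y = P ((P ^ r) y) := by
        rw [pow_succ', Module.End.mul_apply]
      rw [h1, h2, ih (P x) y, hPsa]

lemma aux_bpp (hBalt : ∀ v, B v v = 0) (hPsa : ∀ u v, B (P u) v = B u (P v))
    (a : V) (i j : ℕ) : B ((P ^ i) a) ((P ^ j) a) = 0 := by
  have h1 : B ((P ^ i) a) ((P ^ j) a) = B a ((P ^ (i+j)) a) := by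
    rw [aux_bpow B P hPsa, ← Module.End.mul_apply, ← pow_add]
  have h2 : B ((P ^ (i+j)) a) a = B a ((P ^ (i+j)) a) := aux_bpow B P hPsa _ _ _
  have h3 := aux_bskew B hBalt a ((P ^ (i+j)) a)
  rw [h1]
  linear_combination (h3 - h2) / 2

/-- The basic nilpotent "symplectic transvection-like" operator attached to a
vector `a` and a degree `m`. -/
noncomputable def Sop (a : V) (m : ℕ) : V →ₗ[ℂ] V :=
  ∑ i ∈ Finset.range (m+1), (B.flip ((P ^ i) a)).smulRight ((P ^ (m - i)) a)

lemma Sop_apply (a : V) (m : ℕ) (x : V) :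
    Sop B P a m x = ∑ i ∈ Finset.range (m+1), B x ((P ^ i) a) • (P ^ (m - i)) a := by
  simp [Sop]

lemma Sop_sq (hBalt : ∀ v, B v v = 0) (hPsa : ∀ u v, B (P u) v = B u (P v))
    (a : V) (m : ℕ) (x : V) : Sop B P a m (Sop B P a m x) = 0 := by
  rw [Sop_apply]
  apply Finset.sum_eq_zero
  intro i _
  have h0 : B (Sop B P a m x) ((P ^ i) a) = 0 := by
    rw [Sop_apply]
    simp only [map_sum, map_smul, LinearMap.coe_sum, Finset.sum_apply,
      LinearMap.smul_apply, smul_eq_mul, aux_bpp B P hBalt hPsa, mul_zero,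
      Finset.sum_const_zero]
  rw [h0, zero_smul]

lemma Sop_comm (hPsa : ∀ u v, B (P u) v = B u (P v))
    (a : V) (m : ℕ) (ha : (P ^ (m+1)) a = 0) (x : V) :
    Sop B P a m (P x) = P (Sop B P a m x) := by
  rw [Sop_apply, Sop_apply, map_sum]
  have hL : ∑ i ∈ Finset.range (m+1), B (P x) ((P ^ i) a) • (P ^ (m - i)) a
      = ∑ i ∈ Finset.range m, B x ((P ^ (i+1)) a) • (P ^ (m - i)) a := by
    rw [Finset.sum_range_succ]
    have hlast : B (P x) ((P ^ m) a) • (P ^ (m - m)) a = 0 := by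
      have : B (P x) ((P ^ m) a) = B x ((P ^ (m+1)) a) := by
        rw [hPsa]; congr 1
        rw [pow_succ', Module.End.mul_apply]
      rw [this, ha, map_zero, zero_smul]
    rw [hlast, add_zero]
    apply Finset.sum_congr rfl
    intro i _
    congr 1
    rw [hPsa]; congr 1
    rw [pow_succ', Module.End.mul_apply]
  have hR : ∑ i ∈ Finset.range (m+1), P (B x ((P ^ i) a) • (P ^ (m - i)) a)
      = ∑ i ∈ Finset.range m, B x ((P ^ (i+1)) a) • (P ^ (m - i)) a := by
    rw [Finset.sum_range_succ']
    have hfirst : P (B x ((P ^ 0) a) • (P ^ (m - 0)) a) = B x a • (P ^ (m+1)) a := by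
      rw [map_smul]
      simp only [pow_zero, Module.End.one_apply, Nat.sub_zero]
      congr 1
      rw [pow_succ', Module.End.mul_apply]
    rw [hfirst, ha, smul_zero, add_zero]
    apply Finset.sum_congr rfl
    intro i hi
    rw [map_smul]
    congr 1
    have : m - (i+1) + 1 = m - i := by
      simp at hi; omega
    rw [← this, pow_succ', Module.End.mul_apply]
  rw [hL, hR]

lemma Sop_skew (hBalt : ∀ v, B v v = 0) (a : V) (m : ℕ) (x y : V) :
    B (Sop B P a m x) y = - B x (Sop B P a m y) := by
  rw [Sop_apply, Sop_apply, map_sum, map_sum]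
  simp only [LinearMap.coe_sum, Finset.sum_apply, map_smul, LinearMap.smul_apply,
    smul_eq_mul, ← Finset.sum_neg_distrib]
  rw [← Finset.sum_range_reflect]
  apply Finset.sum_congr rfl
  intro i hi
  simp only [Finset.mem_range] at hi
  have h1 : m + 1 - 1 - i = m - i := by omega
  have h2 : m - (m - i) = i := by omega
  rw [h1, h2]
  rw [aux_bskew B hBalt y ((P ^ i) a)]
  ring

lemma Sop_Bzero (hBalt : ∀ v, B v v = 0) (hPsa : ∀ u v, B (P u) v = B u (P v))
    (a : V) (m : ℕ) (x y : V) :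
    B (Sop B P a m x) (Sop B P a m y) = 0 := by
  rw [Sop_apply B P a m x, map_sum]
  simp only [LinearMap.coe_sum, Finset.sum_apply, map_smul, LinearMap.smul_apply,
    smul_eq_mul]
  apply Finset.sum_eq_zero
  intro i _
  rw [Sop_apply]
  simp only [map_sum, map_smul, LinearMap.coe_sum, Finset.sum_apply,
    LinearMap.smul_apply, smul_eq_mul, aux_bpp B P hBalt hPsa, mul_zero,
    Finset.sum_const_zero]

/-- The automorphism `1 + Sop a m`. -/
noncomputable def gAut (hBalt : ∀ v, B v v = 0) (hPsa : ∀ u v, B (P u) v = B u (P v))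
    (a : V) (m : ℕ) : V ≃ₗ[ℂ] V :=
  LinearEquiv.ofLinear (LinearMap.id + Sop B P a m) (LinearMap.id - Sop B P a m)
    (by
      ext x
      simp [LinearMap.comp_apply, map_sub, Sop_sq B P hBalt hPsa a m])
    (by
      ext x
      simp [LinearMap.comp_apply, map_add, Sop_sq B P hBalt hPsa a m])

lemma gAut_apply (hBalt : ∀ v, B v v = 0) (hPsa : ∀ u v, B (P u) v = B u (P v))
    (a : V) (m : ℕ) (x : V) :
    gAut B P hBalt hPsa a m x = x + Sop B P a m x := rfl

lemma gAut_isAut (hBalt : ∀ v, B v v = 0) (hPsa : ∀ u v, B (P u) v = B u (P v))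
    (a : V) (m : ℕ) (ha : (P ^ (m+1)) a = 0) :
    IsAut B P (gAut B P hBalt hPsa a m) := by
  constructor
  · intro u v
    rw [gAut_apply, gAut_apply]
    simp only [map_add, LinearMap.add_apply]
    rw [Sop_Bzero B P hBalt hPsa a m, Sop_skew B P hBalt a m]
    ring
  · intro v
    rw [gAut_apply, gAut_apply, map_add, Sop_comm B P hPsa a m ha]

lemma Sop_mem (hBalt : ∀ v, B v v = 0) (hPsa : ∀ u v, B (P u) v = B u (P v))
    (U : Submodule ℂ V)
    (hU : ∀ g : V ≃ₗ[ℂ] V, IsAut B P g → Submodule.map g.toLinearMap U = U)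
    (u : V) (hu : u ∈ U) (a : V) (m : ℕ) (ha : (P ^ (m+1)) a = 0) :
    Sop B P a m u ∈ U := by
  have h1 := hU (gAut B P hBalt hPsa a m) (gAut_isAut B P hBalt hPsa a m ha)
  have h2 : gAut B P hBalt hPsa a m u ∈ U := by
    rw [← h1]
    exact ⟨u, hu, rfl⟩
  have h3 := sub_mem h2 hu
  rw [gAut_apply] at h3
  simpa using h3

lemma key_extraction (U : Submodule ℂ V)
    (hPsa : ∀ u v, B (P u) v = B u (P v))
    (hSU : ∀ u ∈ U, ∀ (a : V) (m : ℕ), (P ^ (m+1)) a = 0 → Sop B P a m u ∈ U)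
    (s D : ℕ) (u w y : V) (hu : u ∈ U) (huw : u = (P ^ D) w)
    (hy : (P ^ (s+D)) y = 0) (hby : B ((P ^ (s-1)) u) y ≠ 0) :
    ∀ σ τ, τ + σ = s → ∀ b, (P ^ (s+D)) b = 0 → (P ^ (D+τ)) b ∈ U := by
  intro σ
  induction σ with
  | zero =>
      intro τ hτ b hb
      have h : D + τ = s + D := by omega
      rw [h, hb]
      exact zero_mem U
  | succ σ ih =>
      intro τ hτ b hb
      have stepA : ∀ b : V, (P ^ (s+D)) b = 0 → B ((P ^ (s-1)) u) b ≠ 0 →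
          (P ^ (D+τ)) b ∈ U := by
        intro b hb hcb
        have hpows : ∀ (e f : ℕ) (v : V), (P ^ (e+f)) v = (P ^ e) ((P ^ f) v) := by
          intro e f v
          rw [pow_add, Module.End.mul_apply]
        have ha : (P ^ (σ+D+1)) ((P ^ τ) b) = 0 := by
          rw [← hpows]
          have h : σ + D + 1 + τ = s + D := by omega
          rw [h, hb]
        have hS : Sop B P ((P ^ τ) b) (σ+D) u ∈ U := hSU u hu _ _ ha
        have hsum : Sop B P ((P ^ τ) b) (σ+D) u
            = ∑ i ∈ Finset.range (σ+D+1), B u ((P ^ (i+τ)) b) • (P ^ (σ+D-i+τ)) b := by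
          rw [Sop_apply]
          apply Finset.sum_congr rfl
          intro i _
          rw [← hpows, ← hpows]
        have hvanish : ∀ i ∈ Finset.range (σ+D+1), i ∉ Finset.range (σ+1) →
            B u ((P ^ (i+τ)) b) • (P ^ (σ+D-i+τ)) b = 0 := by
          intro i _ hi2
          simp only [Finset.mem_range, not_lt] at hi2
          have hc : B u ((P ^ (i+τ)) b) = 0 := by
            rw [huw, aux_bpow B P hPsa D w, ← hpows]
            have he : D + (i + τ) = (D + i + τ - (s + D)) + (s + D) := by omega
            rw [he, hpows, hb, map_zero, map_zero]
          rw [hc, zero_smul]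
        have hsum2 : Sop B P ((P ^ τ) b) (σ+D) u
            = ∑ i ∈ Finset.range (σ+1), B u ((P ^ (i+τ)) b) • (P ^ (σ+D-i+τ)) b := by
          rw [hsum]
          rw [Finset.sum_subset (Finset.range_subset_range.mpr (by omega)) hvanish]
        have hsum3 : Sop B P ((P ^ τ) b) (σ+D) u
            = (∑ i ∈ Finset.range σ, B u ((P ^ (i+τ)) b) • (P ^ (σ+D-i+τ)) b)
              + B ((P ^ (s-1)) u) b • (P ^ (D+τ)) b := by
          rw [hsum2, Finset.sum_range_succ]
          congr 1
          have h1 : σ + D - σ + τ = D + τ := by omega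
          have hστ : σ + τ = s - 1 := by omega
          have h2 : B u ((P ^ (σ+τ)) b) = B ((P ^ (s-1)) u) b := by
            rw [hστ, aux_bpow B P hPsa (s-1) u b]
          rw [h1, h2]
        have hlow : (∑ i ∈ Finset.range σ, B u ((P ^ (i+τ)) b) • (P ^ (σ+D-i+τ)) b) ∈ U := by
          apply Submodule.sum_mem
          intro i hi
          simp only [Finset.mem_range] at hi
          apply Submodule.smul_mem
          have he : σ + D - i + τ = (D + (τ+1)) + (σ - 1 - i) := by omega
          rw [he, hpows]
          apply ih (τ+1) (by omega)
          rw [← hpows]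
          have h : s + D + (σ - 1 - i) = (σ - 1 - i) + (s + D) := by omega
          rw [h, hpows, hb, map_zero]
        have hlead : B ((P ^ (s-1)) u) b • (P ^ (D+τ)) b ∈ U := by
          have heq : B ((P ^ (s-1)) u) b • (P ^ (D+τ)) b
              = Sop B P ((P ^ τ) b) (σ+D) u
                - ∑ i ∈ Finset.range σ, B u ((P ^ (i+τ)) b) • (P ^ (σ+D-i+τ)) b := by
            rw [hsum3]; abel
          rw [heq]
          exact sub_mem hS hlow
        have hfin := Submodule.smul_mem U (B ((P ^ (s-1)) u) b)⁻¹ hlead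
        rwa [smul_smul, inv_mul_cancel₀ hcb, one_smul] at hfin
      by_cases hcb : B ((P ^ (s-1)) u) b = 0
      · have h1 : (P ^ (D+τ)) (b + y) ∈ U := by
          apply stepA (b + y)
          · rw [map_add, hb, hy, add_zero]
          · rw [map_add, hcb, zero_add]; exact hby
        have h2 : (P ^ (D+τ)) y ∈ U := stepA y hy hby
        have h3 := sub_mem h1 h2
        rwa [map_add, add_sub_cancel_right] at h3
      · exact stepA b hb hcb

lemma g_pow_comm (g : V ≃ₗ[ℂ] V) (hg : ∀ v, g (P v) = P (g v)) (r : ℕ) (v : V) :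
    g ((P ^ r) v) = (P ^ r) (g v) := by
  induction r generalizing v with
  | zero => simp
  | succ r ih =>
      rw [pow_succ, Module.End.mul_apply, Module.End.mul_apply, ih (P v), hg]

lemma map_piece (g : V ≃ₗ[ℂ] V) (hg : ∀ v, g (P v) = P (g v)) (k l : ℕ) :
    Submodule.map g.toLinearMap (LinearMap.ker (P ^ k) ⊓ LinearMap.range (P ^ l))
      = LinearMap.ker (P ^ k) ⊓ LinearMap.range (P ^ l) := by
  have hg' : ∀ (r : ℕ) (v : V), g.symm ((P ^ r) v) = (P ^ r) (g.symm v) := by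
    intro r v
    apply g.injective
    rw [g.apply_symm_apply, g_pow_comm P g hg, g.apply_symm_apply]
  ext x
  constructor
  · rintro ⟨y, ⟨hyk, z, hz⟩, rfl⟩
    have hyk' : (P ^ k) y = 0 := hyk
    constructor
    · have h1 : (P ^ k) (g y) = 0 := by rw [← g_pow_comm P g hg, hyk', map_zero]
      simpa using h1
    · refine ⟨g z, ?_⟩
      have h2 : (P ^ l) (g z) = g y := by rw [← g_pow_comm P g hg, hz]
      simpa using h2
  · rintro ⟨hxk, z, hz⟩
    refine ⟨g.symm x, ⟨?_, ⟨g.symm z, ?_⟩⟩, by simp⟩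
    · show (P ^ k) (g.symm x) = 0
      rw [← hg', hxk, map_zero]
    · rw [← hg', hz]

end InvariantAux

section InvariantAuxFD

variable {V : Type*} [AddCommGroup V] [Module ℂ V] [FiniteDimensional ℂ V]
variable (B : V →ₗ[ℂ] V →ₗ[ℂ] ℂ) (P : V →ₗ[ℂ] V)

lemma mem_range_of_perp (hBnd : ∀ v, (∀ u, B v u = 0) → v = 0)
    (hPsa : ∀ u v, B (P u) v = B u (P v))
    (r : ℕ) (x : V) (h : ∀ y, (P ^ r) y = 0 → B x y = 0) :
    x ∈ LinearMap.range (P ^ r) := by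
  have hmem : B x ∈ (LinearMap.ker (P ^ r)).dualAnnihilator := by
    rw [Submodule.mem_dualAnnihilator]
    intro w hw
    exact h w hw
  rw [← LinearMap.range_dualMap_eq_dualAnnihilator_ker] at hmem
  obtain ⟨ψ, hψ⟩ := hmem
  have hinj : Function.Injective (B : V →ₗ[ℂ] Module.Dual ℂ V) := by
    rw [injective_iff_map_eq_zero]
    intro v hv
    exact hBnd v fun u => by rw [hv]; rfl
  have hsurj : Function.Surjective (B : V →ₗ[ℂ] Module.Dual ℂ V) := by
    rw [← LinearMap.injective_iff_surjective_of_finrank_eq_finrank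
      (Subspace.dual_finrank_eq (K := ℂ) (V := V)).symm]
    exact hinj
  obtain ⟨z, hz⟩ := hsurj ψ
  refine ⟨z, ?_⟩
  have hxz : ∀ v, B x v = B ((P ^ r) z) v := by
    intro v
    rw [aux_bpow B P hPsa r z v, ← hψ, hz]
    rfl
  have h0 : x - (P ^ r) z = 0 := by
    apply hBnd
    intro u
    rw [map_sub, LinearMap.sub_apply, hxz u, sub_self]
  exact (sub_eq_zero.mp h0).symm

lemma piece_le (U : Submodule ℂ V)
    (hBnd : ∀ v, (∀ u, B v u = 0) → v = 0)
    (hPsa : ∀ u v, B (P u) v = B u (P v))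
    (hSU : ∀ u ∈ U, ∀ (a : V) (m : ℕ), (P ^ (m+1)) a = 0 → Sop B P a m u ∈ U)
    (s D : ℕ) (u w : V) (hu : u ∈ U) (huw : u = (P ^ D) w)
    (hne : (P ^ (s-1)) u ∉ LinearMap.range (P ^ (s+D))) :
    LinearMap.ker (P ^ s) ⊓ LinearMap.range (P ^ D) ≤ U := by
  have hy : ∃ y, (P ^ (s+D)) y = 0 ∧ B ((P ^ (s-1)) u) y ≠ 0 := by
    by_contra hcon
    push_neg at hcon
    exact hne (mem_range_of_perp B P hBnd hPsa (s+D) _ fun y h => hcon y h)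
  obtain ⟨y, hy1, hy2⟩ := hy
  intro v hv
  obtain ⟨hvk, z, hz⟩ := hv
  have hzz : (P ^ (s+D)) z = 0 := by
    rw [pow_add, Module.End.mul_apply, hz]
    exact hvk
  have h := key_extraction B P U hPsa hSU s D u w y hu huw hy1 hy2 s 0 (by omega) z hzz
  rwa [add_zero, hz] at h

lemma main_ind (U : Submodule ℂ V)
    (hBnd : ∀ v, (∀ u, B v u = 0) → v = 0)
    (hPsa : ∀ u v, B (P u) v = B u (P v))
    (hSU : ∀ u ∈ U, ∀ (a : V) (m : ℕ), (P ^ (m+1)) a = 0 → Sop B P a m u ∈ U)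
    (n : ℕ) (hn : P ^ n = 0)
    (T : Submodule ℂ V)
    (hT : ∀ k l : ℕ, k ≤ n → l ≤ n →
      LinearMap.ker (P ^ k) ⊓ LinearMap.range (P ^ l) ≤ U →
      LinearMap.ker (P ^ k) ⊓ LinearMap.range (P ^ l) ≤ T) :
    ∀ (c D : ℕ) (u : V), u ∈ U → u ∈ LinearMap.range (P ^ D) → n ≤ D + c → u ∈ T := by
  intro c
  induction c with
  | zero =>
      intro D u hu hur hnD
      obtain ⟨w, hw⟩ := hur
      have h0 : u = 0 := by
        rw [← hw]
        have h : D = (D - n) + n := by omega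
        rw [h, pow_add, hn, mul_zero]
        rfl
      rw [h0]; exact zero_mem T
  | succ c ih =>
      intro D u hu hur hnD
      obtain ⟨w, hw⟩ := hur
      by_cases hD : n ≤ D
      · have h0 : u = 0 := by
          rw [← hw]
          have h : D = (D - n) + n := by omega
          rw [h, pow_add, hn, mul_zero]
          rfl
        rw [h0]; exact zero_mem T
      push_neg at hD
      classical
      set Pr : ℕ → Prop := fun s => (P ^ (s-1)) u ∉ LinearMap.range (P ^ (s+D)) with hPr
      by_cases hA : ∃ s, Pr s
      · obtain ⟨s₁, hs₁⟩ := hA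
        have hs₁pos : 0 < s₁ := by
          rcases Nat.eq_zero_or_pos s₁ with h | h
          · exfalso; apply hs₁; rw [h]
            simpa using ⟨w, hw⟩
          · exact h
        have hs₁n : s₁ ≤ n := by
          by_contra hcon
          push_neg at hcon
          apply hs₁
          have h0 : (P ^ (s₁-1)) u = 0 := by
            have h : s₁ - 1 = (s₁ - 1 - n) + n := by omega
            rw [h, pow_add, hn, mul_zero]
            rfl
          rw [h0]
          exact zero_mem _
        set s₀ := Nat.findGreatest Pr n with hs₀
        have hPrs₀ : Pr s₀ := Nat.findGreatest_spec hs₁n hs₁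
        have hs₀pos : 0 < s₀ := lt_of_lt_of_le hs₁pos (Nat.le_findGreatest hs₁n hs₁)
        have hs₀n : s₀ ≤ n := Nat.findGreatest_le n
        have hnext : (P ^ s₀) u ∈ LinearMap.range (P ^ (s₀+1+D)) := by
          by_cases h : s₀ + 1 ≤ n
          · have h2 := Nat.findGreatest_is_greatest (Nat.lt_succ_self s₀) h
            rw [hPr] at h2
            simp only [not_not] at h2
            simpa using h2
          · have hs₀n' : s₀ = n := by omega
            have h0 : (P ^ s₀) u = 0 := by rw [hs₀n', hn]; rfl
            rw [h0]; exact zero_mem _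
        obtain ⟨z, hz⟩ := hnext
        set u₁ := u - (P ^ (D+1)) z with hu₁
        have hu₁ker : (P ^ s₀) u₁ = 0 := by
          rw [hu₁, map_sub]
          have h : (P ^ s₀) ((P ^ (D+1)) z) = (P ^ (s₀+1+D)) z := by
            rw [← Module.End.mul_apply, ← pow_add]
            congr 2
            omega
          rw [h, hz, sub_self]
        have hu₁range : u₁ ∈ LinearMap.range (P ^ D) := by
          refine ⟨w - P z, ?_⟩
          rw [map_sub, hw, hu₁]
          congr 1
        have hpU : LinearMap.ker (P ^ s₀) ⊓ LinearMap.range (P ^ D) ≤ U :=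
          piece_le B P U hBnd hPsa hSU s₀ D u w hu hw.symm hPrs₀
        have hu₁U : u₁ ∈ U := hpU ⟨hu₁ker, hu₁range⟩
        have hu₁T : u₁ ∈ T := hT s₀ D hs₀n (le_of_lt hD) hpU ⟨hu₁ker, hu₁range⟩
        have hrU : (P ^ (D+1)) z ∈ U := by
          have h := sub_mem hu hu₁U
          rwa [hu₁, sub_sub_cancel] at h
        have hrT : (P ^ (D+1)) z ∈ T :=
          ih (D+1) _ hrU ⟨z, rfl⟩ (by omega)
        have h : u = u₁ + (P ^ (D+1)) z := by rw [hu₁]; abel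
        rw [h]
        exact add_mem hu₁T hrT
      · push_neg at hA
        have h1 := hA 1
        rw [hPr] at h1
        simp only [not_not] at h1
        have h2 : u ∈ LinearMap.range (P ^ (D+1)) := by
          have h : (P ^ (1-1)) u = u := by simp
          rw [h] at h1
          have h3 : 1 + D = D + 1 := by omega
          rwa [h3] at h1
        exact ih (D+1) u hu h2 (by omega)

end InvariantAuxFD

/-- **Characterization of automorphism-invariant subspaces.**
Let `B` be a nondegenerate alternating form on a finite-dimensional complex vector
space `V` and `P` nilpotent, self-adjoint with respect to `B`.  A subspace `U` is
invariant under every automorphism of `(V, B, P)` iff it is a finite sum of subspaces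
of the form `ker P^k ⊓ im P^l`. -/
theorem invariant_subspaces_characterization
    {V : Type*} [AddCommGroup V] [Module ℂ V] [FiniteDimensional ℂ V]
    (B : V →ₗ[ℂ] V →ₗ[ℂ] ℂ)
    (hBalt : ∀ v, B v v = 0)
    (hBnd : ∀ v, (∀ u, B v u = 0) → v = 0)
    (P : V →ₗ[ℂ] V)
    (hPsa : ∀ u v, B (P u) v = B u (P v))
    (hPnil : IsNilpotent P)
    (U : Submodule ℂ V) :
    (∀ g : V ≃ₗ[ℂ] V, IsAut B P g → Submodule.map g.toLinearMap U = U) ↔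
    ∃ (M : ℕ) (k l : Fin M → ℕ),
      U = ⨆ i : Fin M, (LinearMap.ker (P ^ k i) ⊓ LinearMap.range (P ^ l i)) := by
  classical
  constructor
  · intro hU
    obtain ⟨n, hn⟩ := hPnil
    have hSU : ∀ u ∈ U, ∀ (a : V) (m : ℕ), (P ^ (m+1)) a = 0 → Sop B P a m u ∈ U :=
      fun u hu a m ha => Sop_mem B P hBalt hPsa U hU u hu a m ha
    refine ⟨(n+1)*(n+1),
      fun i => if LinearMap.ker (P ^ (i.val / (n+1))) ⊓
          LinearMap.range (P ^ (i.val % (n+1))) ≤ U then i.val / (n+1) else 0,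
      fun i => i.val % (n+1), ?_⟩
    apply le_antisymm
    · intro u hu
      refine main_ind B P U hBnd hPsa hSU n hn _ ?_ n 0 u hu ⟨u, by simp⟩ (by omega)
      intro k l hk hl hle
      have hidx : k * (n+1) + l < (n+1)*(n+1) := by
        have h1 : k * (n+1) ≤ n * (n+1) := Nat.mul_le_mul_right _ hk
        have h2 : (n+1)*(n+1) = n * (n+1) + (n+1) := by ring
        omega
      set i : Fin ((n+1)*(n+1)) := ⟨k*(n+1)+l, hidx⟩ with hi
      have hco : k * (n+1) + l = (n+1) * k + l := by ring
      have hdiv : i.val / (n+1) = k := by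
        simp only [hi, hco]
        rw [Nat.mul_add_div (by omega), Nat.div_eq_of_lt (by omega), add_zero]
      have hmod : i.val % (n+1) = l := by
        simp only [hi, hco]
        rw [Nat.mul_add_mod]
        exact Nat.mod_eq_of_lt (by omega)
      refine le_trans ?_ (le_iSup _ i)
      beta_reduce
      rw [hdiv, hmod, if_pos hle]
    · apply iSup_le
      intro i
      by_cases hc : LinearMap.ker (P ^ (i.val / (n+1))) ⊓
          LinearMap.range (P ^ (i.val % (n+1))) ≤ U
      · beta_reduce
        rw [if_pos hc]; exact hc
      · beta_reduce
        rw [if_neg hc]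
        intro x hx
        obtain ⟨hx1, -⟩ := hx
        have : x = 0 := by simpa using hx1
        rw [this]; exact zero_mem U
  · rintro ⟨M, k, l, rfl⟩ g hg
    rw [Submodule.map_iSup]
    exact iSup_congr fun i => map_piece P g hg.2 (k i) (l i)
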